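/- Let M be an n×n integer matrix. If the rank of M modulo p (i.e. the rank of its reduction in M_n(𝔽_p)) equals k, then p^(n-k) divides det M. -/

import Mathlib

theorem stmt_1 (p n k : ℕ) [Fact p.Prime] (M : Matrix (Fin n) (Fin n) ℤ)
    (hk : (M.map (Int.cast : ℤ → ZMod p)).rank = k) :
    (p : ℤ) ^ (n - k) ∣ M.det := by
  classical
  set A := M.map (Int.cast : ℤ → ZMod p) with hA
  set K := LinearMap.ker A.mulVecLin with hKdef
  have hkn : k ≤ n := by
    have := A.rank_le_card_width
    simpa [hk] using this
  have hker : Module.finrank (ZMod p) K = n - k := by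
    have h := LinearMap.finrank_range_add_finrank_ker A.mulVecLin
    rw [← hKdef] at h
    rw [Matrix.rank] at hk
    rw [hk] at h
    simp [Module.finrank_pi] at h
    omega
  obtain ⟨Q, hQ⟩ := K.exists_isCompl
  have hq : Module.finrank (ZMod p) Q = k := by
    have h := Submodule.finrank_add_eq_of_isCompl hQ
    simp [hker, Module.finrank_pi] at h
    omega
  let bk : Module.Basis (Fin (n - k)) (ZMod p) K := Module.finBasisOfFinrankEq _ _ hker
  let bq : Module.Basis (Fin k) (ZMod p) Q := Module.finBasisOfFinrankEq _ _ hq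
  let e : Fin (n - k) ⊕ Fin k ≃ Fin n :=
    finSumFinEquiv.trans (finCongr (by omega))
  let b : Module.Basis (Fin n) (ZMod p) (Fin n → ZMod p) :=
    ((bk.prod bq).map (Submodule.prodEquivOfIsCompl K Q hQ)).reindex e
  have hbK : ∀ j : Fin n, j.val < n - k → b j ∈ K := by
    intro j hj
    have he : e.symm j = Sum.inl ⟨j.val, hj⟩ := by
      apply e.injective
      simp only [Equiv.apply_symm_apply, e, Equiv.trans_apply]
      ext
      simp [finSumFinEquiv_apply_left]
    simp only [b, Module.Basis.reindex_apply, he, Module.Basis.map_apply, Module.Basis.prod_apply]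
    simp [Submodule.coe_prodEquivOfIsCompl]
  let Bp : Matrix (Fin n) (Fin n) (ZMod p) := (Pi.basisFun (ZMod p) (Fin n)).toMatrix b
  have hBp : ∀ i j, Bp i j = b j i := by
    intro i j
    simp [Bp, Module.Basis.toMatrix_apply]
  have hBpdet : IsUnit Bp.det := by
    have := (Pi.basisFun (ZMod p) (Fin n)).invertibleToMatrix b
    exact Matrix.isUnit_det_of_invertible Bp
  let B : Matrix (Fin n) (Fin n) ℤ := fun i j => ((Bp i j).val : ℤ)
  have hBcast : B.map (Int.cast : ℤ → ZMod p) = Bp := by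
    ext i j
    rw [Matrix.map_apply]
    simp [B, Matrix.map_apply, ZMod.natCast_val, ZMod.intCast_cast, ZMod.cast_id]
  have hdetB : ¬ (p : ℤ) ∣ B.det := by
    intro h
    have h1 : ((B.det : ℤ) : ZMod p) = Bp.det := by
      have h2 := RingHom.map_det (Int.castRingHom (ZMod p)) B
      simpa [RingHom.mapMatrix_apply, hBcast] using h2
    rw [(ZMod.intCast_zmod_eq_zero_iff_dvd B.det p).mpr h] at h1
    exact hBpdet.ne_zero h1.symm
  have hcol : ∀ (i j : Fin n), j.val < n - k → (p : ℤ) ∣ (M * B) i j := by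
    intro i j hj
    rw [← ZMod.intCast_zmod_eq_zero_iff_dvd]
    have h1 : (((M * B) i j : ℤ) : ZMod p) = (A * Bp) i j := by
      rw [hA, Matrix.mul_apply, Matrix.mul_apply]
      push_cast
      simp [Matrix.map_apply, ← hBcast]
    have h2 : (A * Bp) i j = A.mulVecLin (b j) i := by
      simp [Matrix.mulVecLin_apply, Matrix.mulVec, Matrix.mul_apply, dotProduct, hBp]
    rw [h1, h2, (LinearMap.mem_ker).mp (hbK j hj)]
    rfl
  -- factor out p from the first n - k columns
  let d : Fin n → ℤ := fun j => if j.val < n - k then (p : ℤ) else 1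
  let D : Matrix (Fin n) (Fin n) ℤ :=
    fun i j => if j.val < n - k then (M * B) i j / p else (M * B) i j
  have hfact : M * B = D * Matrix.diagonal d := by
    ext i j
    rw [Matrix.mul_diagonal]
    by_cases h : j.val < n - k
    · simp only [D, d, if_pos h]
      exact (Int.ediv_mul_cancel (hcol i j h)).symm
    · simp [D, d, if_neg h]
  have hprod : ∏ j : Fin n, d j = (p : ℤ) ^ (n - k) := by
    have hcard : (Finset.univ.filter (fun j : Fin n => j.val < n - k)).card = n - k := by
      have hsub : n - k ≤ n := Nat.sub_le n k
      have : (Finset.univ.filter (fun j : Fin n => j.val < n - k)) =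
          (Finset.univ : Finset (Fin (n - k))).map (Fin.castLEEmb hsub) := by
        ext j
        simp only [Finset.mem_filter, Finset.mem_univ, true_and, Finset.mem_map,
          Fin.castLEEmb, Function.Embedding.coeFn_mk]
        constructor
        · intro h
          exact ⟨⟨j.val, h⟩, by ext; simp⟩
        · rintro ⟨i, rfl⟩
          simp [Fin.castLE]
      rw [this, Finset.card_map, Finset.card_univ, Fintype.card_fin]
    rw [show (∏ j : Fin n, d j) = ∏ j : Fin n, (if j.val < n - k then (p : ℤ) else 1) from rfl,
      Finset.prod_ite, Finset.prod_const, Finset.prod_const, one_pow, mul_one, hcard]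
  have hdvd : (p : ℤ) ^ (n - k) ∣ M.det * B.det := by
    rw [← Matrix.det_mul, hfact, Matrix.det_mul, Matrix.det_diagonal, hprod]
    exact dvd_mul_left _ _
  have hp : Prime (p : ℤ) := Nat.prime_iff_prime_int.mp (Fact.out : p.Prime)
  have hcop : IsCoprime ((p : ℤ) ^ (n - k)) B.det :=
    (hp.coprime_iff_not_dvd.mpr hdetB).pow_left
  exact hcop.dvd_of_dvd_mul_right hdvd
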